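/- Let D, U be linear operators on a vector space F over a field of characteristic zero with [D,U] = -λU, and let F₀ = ker D. Then for all n ≥ 0 and all v ∈ F₀, (2D + λnI) B(n,λ,U,D) v = 0. -/

import Mathlib

/-- The binomial-type combination `B(n, λ, U, D)`, with the products ordered
left to right in increasing `j`. -/
noncomputable def binomB {K A : Type*} [Field K] [Ring A] [Algebra K A]
    (n : ℕ) (l : K) (U D : A) : A :=
  ∑ k ∈ Finset.range (n + 1),
    n.choose k •
      (((List.range k).map (fun j : ℕ => D - U + ((j : K) * l) • (1 : A))).prod * U ^ (n - k))

open Finset Nat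

namespace BinomBAux

def dd : ℕ → ℕ → ℕ → ℤ
  | 0, _, 0 => 1
  | 0, _, _+1 => 0
  | k+1, m, 0 => ((k : ℤ) - (m : ℤ)) * dd k m 0
  | k+1, m, i+1 => ((k : ℤ) - (m : ℤ)) * dd k m (i+1) - dd k (m+1) i

lemma dd_succ_zero (k m : ℕ) : dd (k+1) m 0 = ((k : ℤ) - (m : ℤ)) * dd k m 0 := rfl

lemma dd_succ_succ (k m i : ℕ) :
    dd (k+1) m (i+1) = ((k : ℤ) - (m : ℤ)) * dd k m (i+1) - dd k (m+1) i := rfl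

lemma dd_closed (k : ℕ) : ∀ m i : ℕ,
    dd k m i = (-1)^k * (k.choose i : ℤ) * (m.descFactorial (k - i) : ℤ) := by
  induction k with
  | zero =>
    intro m i
    match i with
    | 0 => simp [dd]
    | i+1 => simp [dd, Nat.choose_eq_zero_of_lt (Nat.succ_pos i)]
  | succ k ih =>
    intro m i
    match i with
    | 0 =>
      show ((k : ℤ) - m) * dd k m 0 = _
      rw [ih]
      simp only [Nat.choose_zero_right, Nat.sub_zero, Nat.cast_one]
      rcases lt_or_ge m k with hmk | hkm
      · rw [Nat.descFactorial_eq_zero_iff_lt.mpr hmk,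
          Nat.descFactorial_eq_zero_iff_lt.mpr (by omega : m < k + 1)]
        ring
      · rw [Nat.descFactorial_succ]
        push_cast [Nat.cast_sub hkm]
        ring
    | i+1 =>
      show ((k : ℤ) - m) * dd k m (i+1) - dd k (m+1) i = _
      rw [ih, ih]
      rw [Nat.succ_sub_succ, Nat.choose_succ_succ]
      rcases le_or_gt k i with hki | hik
      · rw [Nat.choose_eq_zero_of_lt (by omega : k < i + 1),
          show k - (i+1) = 0 by omega, show k - i = 0 by omega]
        simp; ring
      · have ht : k - i = (k - (i+1)) + 1 := by omega
        set t := k - (i + 1) with hdef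
        rw [ht, show (m+1).descFactorial (t+1) = (m+1) * m.descFactorial t from
            Nat.succ_descFactorial_succ m t,
          show m.descFactorial (t+1) = (m - t) * m.descFactorial t from
            Nat.descFactorial_succ m t]
        have hrel : (k.choose (i+1) : ℤ) * (i+1) = (k.choose i : ℤ) * ((t : ℤ) + 1) := by
          have h0 : ((k.choose (i+1)) : ℤ) * (i+1) = (k.choose i : ℤ) * ((k - i : ℕ) : ℤ) := by
            exact_mod_cast Nat.choose_succ_right_eq k i
          rw [ht] at h0
          push_cast at h0
          exact h0
        rcases lt_or_ge m t with hmt | htm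
        · rw [Nat.descFactorial_eq_zero_iff_lt.mpr hmt]
          simp
        · rw [Nat.cast_mul, Nat.cast_mul, Nat.cast_sub htm]
          have hk : (k : ℤ) = (t : ℤ) + i + 1 := by omega
          rw [hk]
          push_cast
          linear_combination ((-1 : ℤ))^k * (m.descFactorial t : ℤ) * hrel

lemma dd_zero (k m i : ℕ) (h : k < i) : dd k m i = 0 := by
  rw [dd_closed, Nat.choose_eq_zero_of_lt h]
  simp

lemma key2 (a s t : ℕ) : a.choose t * (a - t).choose s = (a - s).choose t * a.choose s := by
  rcases le_or_gt (t + s) a with hts | hts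
  · have h1 := Nat.choose_mul (n := a) (Nat.le_add_right t s)
    have h2 := Nat.choose_mul (n := a) (Nat.le_add_left s t)
    rw [Nat.add_sub_cancel_left] at h1
    rw [Nat.add_sub_cancel] at h2
    have h3 : (t + s).choose t = (t + s).choose s := Nat.choose_symm_add
    calc a.choose t * (a - t).choose s = a.choose (t + s) * (t + s).choose t := h1.symm
      _ = a.choose (t + s) * (t + s).choose s := by rw [h3]
      _ = a.choose s * (a - s).choose t := h2
      _ = (a - s).choose t * a.choose s := by ring
  · rcases le_or_gt t a with hta | hta
    · rcases le_or_gt s a with hsa | hsa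
      · rw [Nat.choose_eq_zero_of_lt (show a - t < s by omega),
          Nat.choose_eq_zero_of_lt (show a - s < t by omega)]
        ring
      · rw [Nat.choose_eq_zero_of_lt hsa]
        have : a - t < s := by omega
        rw [Nat.choose_eq_zero_of_lt this]
        ring
    · rw [Nat.choose_eq_zero_of_lt hta,
        Nat.choose_eq_zero_of_lt (show a - s < t by omega)]
      ring

lemma key1 (a s t : ℕ) :
    a.choose t * (a - t).descFactorial s = (a - s).choose t * a.descFactorial s := by
  rw [Nat.descFactorial_eq_factorial_mul_choose, Nat.descFactorial_eq_factorial_mul_choose]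
  calc a.choose t * (s ! * (a - t).choose s) = s ! * (a.choose t * (a - t).choose s) := by ring
    _ = s ! * ((a - s).choose t * a.choose s) := by rw [key2]
    _ = (a - s).choose t * (s ! * a.choose s) := by ring

lemma main_sum (n j : ℕ) (hj : j ≤ n) :
    ((n : ℤ) - 2 * j) * ∑ k ∈ Finset.Ico (n - j) (n + 1),
      (n.choose k : ℤ) * dd k (n - k) (j + k - n) = 0 := by
  rcases eq_or_ne (2 * j) n with h2 | h2
  · have : ((n : ℤ) - 2 * j) = 0 := by omega
    rw [this, zero_mul]
  · apply mul_eq_zero_of_right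
    have hsum : ∀ k ∈ Finset.Ico (n - j) (n + 1),
        (n.choose k : ℤ) * dd k (n - k) (j + k - n)
        = (-1 : ℤ)^k * ((n.choose k * k.choose (k - (n - j)) *
            (n - k).descFactorial (n - j) : ℕ) : ℤ) := by
      intro k hk
      rw [Finset.mem_Ico] at hk
      rw [dd_closed, show j + k - n = k - (n - j) by omega,
        show k - (k - (n - j)) = n - j by omega]
      push_cast
      ring
    rw [Finset.sum_congr rfl hsum]
    rcases lt_or_ge j (n - j) with hjs | hsj
    · apply Finset.sum_eq_zero
      intro k hk
      rw [Finset.mem_Ico] at hk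
      rw [Nat.descFactorial_eq_zero_iff_lt.mpr (show n - k < n - j by omega)]
      simp
    · have hsj' : n - j < j := by omega
      have hterm : ∀ k ∈ Finset.Ico (n - j) (n + 1),
          (n.choose k * k.choose (k - (n - j)) * (n - k).descFactorial (n - j) : ℕ)
          = n.choose (n - j) * (n - (n - j)).descFactorial (n - j) *
              (n - 2 * (n - j)).choose (k - (n - j)) := by
        intro k hk
        rw [Finset.mem_Ico] at hk
        rw [Nat.choose_symm (show n - j ≤ k by omega),
          Nat.choose_mul (n := n) (show n - j ≤ k by omega)]
        have h1 := key1 (n - (n - j)) (n - j) (k - (n - j))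
        rw [show n - (n - j) - (k - (n - j)) = n - k by omega,
          show n - (n - j) - (n - j) = n - 2 * (n - j) by omega] at h1
        rw [mul_assoc, h1]
        ring
      rw [Finset.sum_congr rfl (fun k hk => by rw [hterm k hk])]
      rw [Finset.sum_Ico_eq_sum_range]
      rw [show n + 1 - (n - j) = j + 1 by omega]
      have halt : ∑ t ∈ Finset.range (j + 1), (-1 : ℤ)^t * ((n - 2 * (n - j)).choose t) = 0 := by
        set p := n - 2 * (n - j) with hp
        have hp0 : p ≠ 0 := by omega
        have hpj : p + 1 ≤ j + 1 := by omega
        rw [Finset.range_eq_Ico, ← Finset.sum_Ico_consecutive _ (Nat.zero_le (p+1)) hpj]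
        have htail : ∑ t ∈ Finset.Ico (p+1) (j+1), (-1 : ℤ)^t * ((p.choose t : ℕ) : ℤ) = 0 := by
          apply Finset.sum_eq_zero
          intro t ht
          rw [Finset.mem_Ico] at ht
          rw [Nat.choose_eq_zero_of_lt (by omega)]
          simp
        rw [htail, add_zero, ← Finset.range_eq_Ico, Int.alternating_sum_range_choose, if_neg hp0]
      calc ∑ t ∈ Finset.range (j + 1), (-1 : ℤ)^(n - j + t) *
              ((n.choose (n - j) * (n - (n - j)).descFactorial (n - j) *
                (n - 2 * (n - j)).choose (n - j + t - (n - j)) : ℕ) : ℤ)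
          = ((-1 : ℤ)^(n - j) * (n.choose (n - j) * (n - (n - j)).descFactorial (n - j) : ℕ)) *
            ∑ t ∈ Finset.range (j + 1), (-1 : ℤ)^t * ((n - 2 * (n - j)).choose t) := by
            rw [Finset.mul_sum]
            apply Finset.sum_congr rfl
            intro t ht
            rw [show n - j + t - (n - j) = t by omega, pow_add]
            push_cast
            ring
        _ = 0 := by rw [halt, mul_zero]

section Main


variable {K F : Type*} [Field K] [CharZero K] [AddCommGroup F] [Module K F]
variable (l : K) (D U : Module.End K F)

lemma hpow_aux (h : D * U - U * D = -(l • U)) (m : ℕ) :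
    D * U ^ m = U ^ m * D - ((m : K) * l) • U ^ m := by
  induction m with
  | zero => simp
  | succ m ih =>
    have hDU : D * U = U * D - l • U := by
      have := h
      rw [sub_eq_iff_eq_add] at this
      rw [this]
      abel
    rw [pow_succ, ← mul_assoc, ih, sub_mul, smul_mul_assoc, mul_assoc, hDU, mul_sub,
      mul_smul_comm, ← pow_succ, ← mul_assoc, ← pow_succ]
    push_cast
    rw [add_mul, one_mul, add_smul]
    abel

lemma hw_aux (h : D * U - U * D = -(l • U)) (v : F) (hv : D v = 0) (m : ℕ) :
    D ((U ^ m) v) = (-((m : K) * l)) • (U ^ m) v := by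
  have := congrArg (fun f : Module.End K F => f v) (hpow_aux l D U h m)
  simp only [Module.End.mul_apply, LinearMap.sub_apply, LinearMap.smul_apply] at this
  rw [this, hv, map_zero, zero_sub, neg_smul]


lemma hP_aux (h : D * U - U * D = -(l • U)) (v : F) (hv : D v = 0) (k : ℕ) : ∀ m : ℕ,
    (((List.range k).map (fun j : ℕ => D - U + ((j : K) * l) • (1 : Module.End K F))).prod)
        ((U ^ m) v)
      = ∑ i ∈ Finset.range (k + 1), ((dd k m i : K) * l ^ (k - i)) • (U ^ (m + i)) v := by
  induction k with
  | zero =>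
    intro m
    simp [dd]
  | succ k ih =>
    intro m
    rw [List.range_succ, List.map_append, List.prod_append]
    simp only [List.map_cons, List.map_nil, List.prod_cons, List.prod_nil, mul_one]
    rw [Module.End.mul_apply]
    have hstep : (D - U + ((k : K) * l) • (1 : Module.End K F)) ((U ^ m) v)
        = ((((k : K) - m) * l) • (U ^ m) v) - (U ^ (m + 1)) v := by
      simp only [LinearMap.add_apply, LinearMap.sub_apply, LinearMap.smul_apply,
        Module.End.one_apply, hw_aux l D U h v hv m]
      rw [show (U ^ (m+1)) v = U ((U ^ m) v) by rw [_root_.pow_succ']; rfl]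
      module
    rw [hstep, map_sub, map_smul, ih, ih, Finset.smul_sum]
    simp only [smul_smul]
    have shift : ∀ g : ℕ → K, g (k+1) = 0 →
        ∑ x ∈ Finset.range (k+1), (g x * l ^ (k + 1 - x)) • (U ^ (m + x)) v
        = ∑ x ∈ Finset.range (k+1), (g (x+1) * l ^ (k - x)) • (U ^ (m + (x+1))) v
          + (g 0 * l ^ (k+1)) • (U ^ m) v := by
      intro g hg
      rw [Finset.sum_range_succ']
      conv_rhs => rw [Finset.sum_range_succ]
      rw [hg]
      simp only [zero_mul, zero_smul, add_zero, Nat.add_sub_add_right, Nat.sub_zero,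
        Nat.add_zero]
    have h1 : ∑ x ∈ Finset.range (k+1),
          ((((k : K) - m) * l) * ((dd k m x : K) * l ^ (k - x))) • (U ^ (m + x)) v
        = ∑ x ∈ Finset.range (k+1),
          ((((k : K) - m) * (dd k m x : K)) * l ^ (k + 1 - x)) • (U ^ (m + x)) v := by
      apply Finset.sum_congr rfl
      intro x hx
      rw [Finset.mem_range] at hx
      rw [show k + 1 - x = (k - x) + 1 by omega, _root_.pow_succ]
      congr 1
      ring
    rw [h1, shift (fun x => ((k : K) - m) * (dd k m x : K))
      (by simp [dd_zero k m (k+1) (Nat.lt_succ_self k)])]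
    conv_rhs => rw [Finset.sum_range_succ']
    simp only [dd_succ_succ, dd_succ_zero, Nat.add_sub_add_right, Nat.sub_zero, Nat.add_zero,
      Int.cast_sub, Int.cast_mul, Int.cast_natCast]
    rw [Finset.sum_congr rfl (fun x _ => by
      rw [sub_mul, sub_smul] :
        ∀ x ∈ Finset.range (k+1),
          (((((k : K) - m) * (dd k m (x+1) : K)) - (dd k (m+1) x : K)) * l ^ (k - x)) •
              (U ^ (m + (x+1))) v
          = ((((k : K) - m) * (dd k m (x+1) : K)) * l ^ (k - x)) • (U ^ (m + (x+1))) v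
            - ((dd k (m+1) x : K) * l ^ (k - x)) • (U ^ (m + (x+1))) v)]
    rw [Finset.sum_sub_distrib]
    simp only [show ∀ x : ℕ, m + 1 + x = m + (x + 1) from fun x => by omega]
    abel

theorem binomB_annihilated_on_ker'
    (h : D * U - U * D = -(l • U))
    (n : ℕ) (v : F) (hv : D v = 0) :
    ((2 : K) • D + ((n : K) * l) • (1 : Module.End K F)) (binomB n l U D v) = 0 := by
  have hw := hw_aux l D U h v hv
  have hP := hP_aux l D U h v hv
  have hT : ∀ j : ℕ, ((2 : K) • D + ((n : K) * l) • (1 : Module.End K F)) ((U ^ j) v)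
      = (((n : K) - 2 * j) * l) • (U ^ j) v := by
    intro j
    simp only [LinearMap.add_apply, LinearMap.smul_apply, Module.End.one_apply, hw j]
    module
  have hB : binomB n l U D v
      = ∑ k ∈ Finset.range (n+1), ∑ i ∈ Finset.range (k+1),
          ((n.choose k : K) * ((dd k (n-k) i : K) * l ^ (k - i))) • (U ^ (n - k + i)) v := by
    unfold binomB
    rw [LinearMap.sum_apply]
    apply Finset.sum_congr rfl
    intro k hk
    rw [LinearMap.smul_apply, Module.End.mul_apply, hP k (n-k),
      ← Nat.cast_smul_eq_nsmul K, Finset.smul_sum]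
    simp only [smul_smul]
  rw [hB, map_sum]
  trans (∑ k ∈ Finset.range (n+1), ∑ j ∈ Finset.range (n+1),
      if n ≤ k + j then
        (((n.choose k : K) * (dd k (n-k) (j + k - n) : K)) *
          ((((n : K) - 2 * (j : ℕ)) * l) * l ^ (n - j))) • (U ^ j) v
      else 0)
  · apply Finset.sum_congr rfl
    intro k hk
    rw [Finset.mem_range] at hk
    rw [map_sum]
    have hfil : Finset.filter (fun j => n ≤ k + j) (Finset.range (n+1))
        = Finset.Ico (n-k) (n+1) := by
      ext j
      simp only [Finset.mem_filter, Finset.mem_range, Finset.mem_Ico]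
      omega
    rw [← Finset.sum_filter, hfil, Finset.sum_Ico_eq_sum_range,
      show n + 1 - (n-k) = k + 1 by omega]
    apply Finset.sum_congr rfl
    intro i hi
    rw [Finset.mem_range] at hi
    rw [map_smul, hT, smul_smul]
    rw [show n - k + i + k - n = i by omega, show n - (n - k + i) = k - i by omega]
    congr 1
    ring
  · rw [Finset.sum_comm]
    apply Finset.sum_eq_zero
    intro j hj
    rw [Finset.mem_range] at hj
    have hfil2 : Finset.filter (fun k => n ≤ k + j) (Finset.range (n+1))
        = Finset.Ico (n-j) (n+1) := by
      ext k
      simp only [Finset.mem_filter, Finset.mem_range, Finset.mem_Ico]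
      omega
    rw [← Finset.sum_filter, hfil2, ← Finset.sum_smul]
    have key := main_sum n j (by omega)
    have key2 : (((n : ℤ) - 2 * j : ℤ) : K) *
        ((∑ k ∈ Finset.Ico (n-j) (n+1), (n.choose k : ℤ) * dd k (n-k) (j + k - n) : ℤ) : K)
        = 0 := by
      rw [← Int.cast_mul, key, Int.cast_zero]
    push_cast at key2
    have hC : ∑ k ∈ Finset.Ico (n-j) (n+1),
        ((n.choose k : K) * (dd k (n-k) (j + k - n) : K)) *
          ((((n : K) - 2 * (j : ℕ)) * l) * l ^ (n - j))
        = ((((n : K) - 2 * (j : ℕ))) *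
            ∑ k ∈ Finset.Ico (n-j) (n+1), (n.choose k : K) * (dd k (n-k) (j + k - n) : K)) *
          (l * l ^ (n - j)) := by
      rw [Finset.mul_sum, Finset.sum_mul]
      apply Finset.sum_congr rfl
      intro k _
      ring
    rw [hC, key2, zero_mul, zero_smul]

end Main

end BinomBAux

theorem binomB_annihilated_on_ker
    {K F : Type*} [Field K] [CharZero K] [AddCommGroup F] [Module K F]
    (l : K) (D U : Module.End K F)
    (h : D * U - U * D = -(l • U))
    (n : ℕ) (v : F) (hv : D v = 0) :
    ((2 : K) • D + ((n : K) * l) • (1 : Module.End K F)) (binomB n l U D v) = 0 :=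
  BinomBAux.binomB_annihilated_on_ker' l D U h n v hv
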